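/- For every fixed z ∈ ℝ, the cdf Φ_s(z) of the standardized generalized normal distribution converges as s → ∞ to: 0 if z < −1, (z+1)/2 if |z| < 1, and 1 if z > 1. -/

import Mathlib

open MeasureTheory Real Filter

lemma bgn_const_tendsto :
    Tendsto (fun s : ℝ => s / (2 * Real.Gamma (1 / s))) atTop (nhds (1 / 2)) := by
  have hG : Tendsto (fun s : ℝ => Real.Gamma (1 / s + 1)) atTop (nhds 1) := by
    have hc : ContinuousAt Real.Gamma 1 := by
      refine (Real.differentiableAt_Gamma fun m => ?_).continuousAt
      intro h
      have h0 : (0:ℝ) ≤ m := Nat.cast_nonneg m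
      linarith
    have h1 : Tendsto (fun s : ℝ => 1 / s + 1) atTop (nhds (0 + 1)) := by
      exact (tendsto_inv_atTop_zero.congr fun s => (one_div s).symm).add tendsto_const_nhds
    rw [zero_add] at h1
    have := hc.tendsto.comp h1
    rwa [Real.Gamma_one] at this
  have h2 : Tendsto (fun s : ℝ => 1 / (2 * Real.Gamma (1 / s + 1))) atTop
      (nhds (1 / (2 * 1))) := by
    apply Tendsto.div tendsto_const_nhds ((tendsto_const_nhds).mul hG) (by norm_num)
  rw [show (1:ℝ) / (2 * 1) = 1 / 2 by norm_num] at h2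
  refine h2.congr' ?_
  filter_upwards [eventually_gt_atTop (0:ℝ)] with s hs
  have hsne : (1:ℝ) / s ≠ 0 := by positivity
  have hGpos : 0 < Real.Gamma (1 / s) := Real.Gamma_pos_of_pos (by positivity)
  rw [Real.Gamma_add_one hsne]
  field_simp

lemma bgn_integral_tendsto (z : ℝ) :
    Tendsto (fun s : ℝ => ∫ t in Set.Iic z, Real.exp (-(|t| ^ s))) atTop
      (nhds (∫ t in Set.Iic z, Set.indicator (Set.Ioo (-1:ℝ) 1) (fun _ => (1:ℝ)) t)) := by
  apply tendsto_integral_filter_of_dominated_convergence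
      (fun t => Real.exp 1 * Real.exp (-(1:ℝ) * t ^ 2))
  · filter_upwards [eventually_ge_atTop (0:ℝ)] with s hs
    have hcont : Continuous fun t : ℝ => Real.exp (-(|t| ^ s)) := by
      apply Real.continuous_exp.comp
      apply Continuous.neg
      rw [continuous_iff_continuousAt]
      intro t
      exact (Real.continuousAt_rpow_const _ _ (Or.inr hs)).comp continuous_abs.continuousAt
    exact hcont.aestronglyMeasurable
  · filter_upwards [eventually_ge_atTop (2:ℝ)] with s hs
    apply MeasureTheory.ae_of_all
    intro t
    rw [Real.norm_eq_abs, abs_of_pos (Real.exp_pos _), ← Real.exp_add]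
    apply Real.exp_le_exp.mpr
    rcases le_or_gt (|t|) 1 with ht | ht
    · have h1 : (0:ℝ) ≤ |t| ^ s := Real.rpow_nonneg (abs_nonneg t) s
      nlinarith [sq_abs t, abs_nonneg t]
    · have h2 : |t| ^ (2:ℝ) ≤ |t| ^ s :=
        Real.rpow_le_rpow_of_exponent_le ht.le hs
      have h3 : |t| ^ (2:ℝ) = t ^ 2 := by
        rw [show (2:ℝ) = ((2:ℕ):ℝ) by norm_num, Real.rpow_natCast, sq_abs]
      nlinarith [Real.exp_pos (1:ℝ)]
  · exact ((integrable_exp_neg_mul_sq one_pos).const_mul (Real.exp 1)).restrict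
  · apply ae_restrict_of_ae
    have h01 : ∀ᵐ t : ℝ, t ∉ ({1, -1} : Set ℝ) :=
      ((Set.finite_singleton (-1:ℝ)).insert 1 |>.countable).ae_notMem _
    filter_upwards [h01] with t ht
    simp only [Set.mem_insert_iff, Set.mem_singleton_iff, not_or] at ht
    rcases lt_trichotomy (|t|) 1 with h | h | h
    · have hmem : t ∈ Set.Ioo (-1:ℝ) 1 := by
        rw [Set.mem_Ioo]; constructor <;> [linarith [abs_lt.mp h]; exact (abs_lt.mp h).2]
      rw [Set.indicator_of_mem hmem]
      have hb : Tendsto (fun s : ℝ => |t| ^ s) atTop (nhds 0) :=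
        tendsto_rpow_atTop_of_base_lt_one _ (by linarith [abs_nonneg t]) h
      have := (Real.continuous_exp.tendsto _).comp hb.neg
      simpa [Function.comp_def] using this
    · exfalso
      rcases abs_eq (by norm_num : (0:ℝ) ≤ 1) |>.mp h with h' | h'
      · exact ht.1 h'
      · exact ht.2 h'
    · have hmem : t ∉ Set.Ioo (-1:ℝ) 1 := by
        rw [Set.mem_Ioo]; rintro ⟨h1, h2⟩
        have := abs_lt.mpr ⟨h1, h2⟩; linarith
      rw [Set.indicator_of_notMem hmem]
      have hb : Tendsto (fun s : ℝ => |t| ^ s) atTop atTop := by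
        have : (fun s : ℝ => |t| ^ s) = fun s => Real.exp (Real.log |t| * s) := by
          funext s; rw [Real.rpow_def_of_pos (by linarith)]
        rw [this]
        exact Real.tendsto_exp_atTop.comp
          (Tendsto.const_mul_atTop (Real.log_pos h) tendsto_id)
      exact Real.tendsto_exp_atBot.comp (tendsto_neg_atTop_atBot.comp hb)

lemma bgn_indicator_integral (z : ℝ) :
    ∫ t in Set.Iic z, Set.indicator (Set.Ioo (-1:ℝ) 1) (fun _ => (1:ℝ)) t =
      (volume (Set.Ioo (-1:ℝ) 1 ∩ Set.Iic z)).toReal := by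
  rw [MeasureTheory.integral_indicator measurableSet_Ioo,
    Measure.restrict_restrict measurableSet_Ioo, MeasureTheory.setIntegral_const, smul_eq_mul,
    mul_one]
  rfl

theorem bgn_Phi_limit (z : ℝ)
    (Φ : ℝ → ℝ → ℝ)
    (hΦ : ∀ s z, Φ s z =
      ∫ t in Set.Iic z, s / (2 * Real.Gamma (1 / s)) * Real.exp (-(|t| ^ s))) :
    (z < -1 → Tendsto (fun s : ℝ => Φ s z) atTop (nhds 0)) ∧
    (|z| < 1 → Tendsto (fun s : ℝ => Φ s z) atTop (nhds ((z + 1) / 2))) ∧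
    (1 < z → Tendsto (fun s : ℝ => Φ s z) atTop (nhds 1)) := by
  have hkey : ∀ L : ℝ,
      (volume (Set.Ioo (-1:ℝ) 1 ∩ Set.Iic z)).toReal = L →
      Tendsto (fun s : ℝ => Φ s z) atTop (nhds (1 / 2 * L)) := by
    intro L hL
    have heq : ∀ s : ℝ, Φ s z = s / (2 * Real.Gamma (1 / s)) *
        ∫ t in Set.Iic z, Real.exp (-(|t| ^ s)) := by
      intro s; rw [hΦ, MeasureTheory.integral_const_mul]
    simp_rw [heq]
    have h2 := bgn_integral_tendsto z
    rw [bgn_indicator_integral, hL] at h2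
    exact bgn_const_tendsto.mul h2
  refine ⟨fun hz => ?_, fun hz => ?_, fun hz => ?_⟩
  · have h0 : Set.Ioo (-1:ℝ) 1 ∩ Set.Iic z = ∅ := by
      ext t; simp only [Set.mem_inter_iff, Set.mem_Ioo, Set.mem_Iic, Set.mem_empty_iff_false,
        iff_false, not_and]
      intro ⟨h1, _⟩ h3; linarith
    have := hkey 0 (by rw [h0]; simp)
    simpa using this
  · obtain ⟨h1, h2⟩ := abs_lt.mp hz
    have h0 : Set.Ioo (-1:ℝ) 1 ∩ Set.Iic z = Set.Ioc (-1:ℝ) z := by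
      ext t; simp only [Set.mem_inter_iff, Set.mem_Ioo, Set.mem_Iic, Set.mem_Ioc]
      constructor
      · rintro ⟨⟨ha, _⟩, hc⟩; exact ⟨ha, hc⟩
      · rintro ⟨ha, hb⟩; exact ⟨⟨ha, by linarith⟩, hb⟩
    have hval : (volume (Set.Ioo (-1:ℝ) 1 ∩ Set.Iic z)).toReal = z + 1 := by
      rw [h0, Real.volume_Ioc, ENNReal.toReal_ofReal (by linarith)]; ring
    have := hkey (z + 1) hval
    rwa [show (1:ℝ) / 2 * (z + 1) = (z + 1) / 2 by ring] at this
  · have h0 : Set.Ioo (-1:ℝ) 1 ∩ Set.Iic z = Set.Ioo (-1:ℝ) 1 := by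
      rw [Set.inter_eq_left]
      intro t ht; rw [Set.mem_Iic]; exact le_of_lt (lt_trans ht.2 hz)
    have hval : (volume (Set.Ioo (-1:ℝ) 1 ∩ Set.Iic z)).toReal = 2 := by
      rw [h0, Real.volume_Ioo, ENNReal.toReal_ofReal (by norm_num)]; norm_num
    have := hkey 2 hval
    rwa [show (1:ℝ) / 2 * 2 = 1 by ring] at this
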